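/- Computing A(1,n,k) via the halving recursion A(i,j,q) = min_m [A(i,m,⌊q/2⌋) + A(m+1,j,⌈q/2⌉) + C(i,m,j)] only requires values A(·,·,q) for q in the set S = {⌊k/2^l⌋ : l ≥ 0} ∪ {⌈k/2^l⌉ : l ≥ 0}, and this set S has cardinality O(log k); more precisely, the set {⌊k/2^l⌋, ⌈k/2^l⌉ : 0 ≤ l ≤ ⌈log₂ k⌉} is closed under the operations q ↦ ⌊q/2⌋ and q ↦ ⌈q/2⌉ and has at most 2(⌈log₂ k⌉ + 1) elements. -/

import Mathlib

private lemma d1 (m a r : ℕ) (hm : 0 < m) : (2 * m * a + r) / m = 2 * a + r / m := by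
  have h : 2 * m * a + r = m * (2 * a) + r := by ring
  rw [h, Nat.mul_add_div hm]

private lemma d2 (m a r : ℕ) (hm : 0 < m) :
    (2 * m * a + r + m - 1) / m = 2 * a + (r + m - 1) / m := by
  have hmm : m * (2 * a) = 2 * m * a := by ring
  have h : 2 * m * a + r + m - 1 = m * (2 * a) + (r + m - 1) := by omega
  rw [h, Nat.mul_add_div hm]

private lemma d3 (m a r : ℕ) (hm : 0 < m) (hr : r < 2 * m) : (2 * m * a + r) / (2 * m) = a := by
  rw [Nat.mul_add_div (by omega), Nat.div_eq_of_lt hr]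
  simp

private lemma d4 (m a r : ℕ) (hm : 0 < m) :
    (2 * m * a + r + 2 * m - 1) / (2 * m) = a + (r + 2 * m - 1) / (2 * m) := by
  have h : 2 * m * a + r + 2 * m - 1 = 2 * m * a + (r + 2 * m - 1) := by omega
  rw [h, Nat.mul_add_div (by omega)]

-- covers all four compositions of floor/ceil halving
private lemma comp (m k : ℕ) (hm : 0 < m) :
    ((k / m) / 2 = k / (2 * m))
    ∧ ((k / m + 1) / 2 = k / (2 * m) ∨ (k / m + 1) / 2 = (k + 2 * m - 1) / (2 * m))
    ∧ (((k + m - 1) / m + 1) / 2 = k / (2 * m)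
        ∨ ((k + m - 1) / m + 1) / 2 = (k + 2 * m - 1) / (2 * m))
    ∧ (((k + m - 1) / m) / 2 = k / (2 * m)
        ∨ ((k + m - 1) / m) / 2 = (k + 2 * m - 1) / (2 * m)) := by
  obtain ⟨a, r, hr, rfl⟩ : ∃ a r, r < 2 * m ∧ k = 2 * m * a + r :=
    ⟨k / (2 * m), k % (2 * m), Nat.mod_lt _ (by omega), (Nat.div_add_mod k (2 * m)).symm⟩
  rw [d1 m a r hm, d2 m a r hm, d3 m a r hm hr, d4 m a r hm]
  have e1 : (r < m ∧ r / m = 0) ∨ (m ≤ r ∧ r / m = 1) := by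
    rcases Nat.lt_or_ge r m with h | h
    · exact Or.inl ⟨h, Nat.div_eq_of_lt h⟩
    · exact Or.inr ⟨h, by rw [Nat.div_eq_sub_div hm h, Nat.div_eq_of_lt (by omega)]⟩
  have e2 : (r = 0 ∧ (r + m - 1) / m = 0) ∨ (1 ≤ r ∧ r ≤ m ∧ (r + m - 1) / m = 1)
      ∨ (m + 1 ≤ r ∧ (r + m - 1) / m = 2) := by
    rcases Nat.eq_zero_or_pos r with h0 | h0
    · left; exact ⟨h0, by subst h0; simpa using Nat.div_eq_of_lt (by omega)⟩
    · rcases le_or_gt r m with h1 | h1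
      · right; left
        exact ⟨h0, h1, by rw [Nat.div_eq_sub_div hm (by omega), Nat.div_eq_of_lt (by omega)]⟩
      · right; right
        refine ⟨h1, ?_⟩
        rw [Nat.div_eq_sub_div hm (by omega), Nat.div_eq_sub_div hm (by omega),
          Nat.div_eq_of_lt (by omega)]
  have e3 : (r = 0 ∧ (r + 2 * m - 1) / (2 * m) = 0) ∨ (1 ≤ r ∧ (r + 2 * m - 1) / (2 * m) = 1) := by
    rcases Nat.eq_zero_or_pos r with h0 | h0
    · left; exact ⟨h0, by subst h0; exact Nat.div_eq_of_lt (by omega)⟩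
    · right
      exact ⟨h0, by rw [Nat.div_eq_sub_div (by omega) (by omega), Nat.div_eq_of_lt (by omega)]⟩
  omega

/-- The set `S = {⌊k/2^l⌋, ⌈k/2^l⌉ : 0 ≤ l ≤ ⌈log₂ k⌉}` contains `k`, is closed under
`q ↦ ⌈q/2⌉` (for `q ≥ 1`) and `q ↦ ⌊q/2⌋` (for `q ≥ 2`), and has at most
`2(⌈log₂ k⌉ + 1)` elements; hence the halving recursion for `A(1,n,k)` only needs the
`O(log k)` values `A(·,·,q)` with `q ∈ S`. -/
theorem stmt3 (k : ℕ) (hk : 1 ≤ k) (S : Finset ℕ)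
    (hS : S = (Finset.range (Nat.clog 2 k + 1)).image (fun l => k / 2 ^ l)
        ∪ (Finset.range (Nat.clog 2 k + 1)).image (fun l => (k + 2 ^ l - 1) / 2 ^ l)) :
    k ∈ S
    ∧ (∀ q ∈ S, (1 ≤ q → (q + 1) / 2 ∈ S) ∧ (2 ≤ q → q / 2 ∈ S))
    ∧ S.card ≤ 2 * (Nat.clog 2 k + 1) := by
  have memF : ∀ l, l ≤ Nat.clog 2 k → k / 2 ^ l ∈ S := by
    intro l hl
    rw [hS]
    exact Finset.mem_union_left _ (Finset.mem_image.2 ⟨l, Finset.mem_range.2 (by omega), rfl⟩)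
  have memC : ∀ p, p ≤ Nat.clog 2 k → (k + 2 ^ p - 1) / 2 ^ p ∈ S := by
    intro p hp
    rw [hS]
    exact Finset.mem_union_right _ (Finset.mem_image.2 ⟨p, Finset.mem_range.2 (by omega), rfl⟩)
  refine ⟨by simpa using memF 0 (Nat.zero_le _), ?_, ?_⟩
  · intro q hq
    rw [hS, Finset.mem_union, Finset.mem_image, Finset.mem_image] at hq
    have hstep : ∀ l : ℕ, 2 ^ l < k → l + 1 ≤ Nat.clog 2 k := by
      intro l h
      have h2 := (Nat.clog_le_iff_le_pow (b := 2) one_lt_two (x := k) (y := l))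
      omega
    obtain ⟨l, hl, rfl⟩ | ⟨l, hl, rfl⟩ := hq <;> rw [Finset.mem_range] at hl
    · -- q = k / 2^l
      have hm : 0 < 2 ^ l := Nat.pow_pos (by norm_num)
      obtain ⟨h1, h2, h3, h4⟩ := comp (2 ^ l) k hm
      have hlt : 2 ≤ k / 2 ^ l → 2 ^ l < k := by
        intro h
        by_contra h'
        have := Nat.div_le_div_right (c := 2 ^ l) (by omega : k ≤ 2 ^ l)
        rw [Nat.div_self hm] at this
        omega
      constructor
      · intro hq1
        rcases Nat.lt_or_ge (k / 2 ^ l) 2 with h | h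
        · have heq : (k / 2 ^ l + 1) / 2 = k / 2 ^ l := by omega
          rw [heq]; exact memF l (by omega)
        · have hl' := hstep l (hlt h)
          rcases h2 with h2 | h2 <;> rw [h2]
          · have := memF (l + 1) hl'; rwa [pow_succ, mul_comm] at this
          · have := memC (l + 1) hl'; rwa [pow_succ, mul_comm] at this
      · intro hq2
        have hl' := hstep l (hlt hq2)
        rw [h1]
        have := memF (l + 1) hl'; rwa [pow_succ, mul_comm] at this
    · -- q = (k + 2^l - 1) / 2^l
      have hm : 0 < 2 ^ l := Nat.pow_pos (by norm_num)
      obtain ⟨h1, h2, h3, h4⟩ := comp (2 ^ l) k hm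
      have hlt2 : 2 ≤ (k + 2 ^ l - 1) / 2 ^ l → 2 ^ l < k := by
        intro h
        by_contra h'
        have := Nat.div_lt_of_lt_mul (by omega : k + 2 ^ l - 1 < 2 ^ l * 2)
        omega
      constructor
      · intro hq1
        rcases Nat.lt_or_ge ((k + 2 ^ l - 1) / 2 ^ l) 2 with h | h
        · have heq : ((k + 2 ^ l - 1) / 2 ^ l + 1) / 2 = (k + 2 ^ l - 1) / 2 ^ l := by
            have h1le : 2 ^ l ≤ k + 2 ^ l - 1 := by omega
            have := Nat.div_le_div_right (c := 2 ^ l) h1le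
            rw [Nat.div_self hm] at this
            omega
          rw [heq]; exact memC l (by omega)
        · have hl' := hstep l (hlt2 h)
          rcases h3 with h3 | h3 <;> rw [h3]
          · have := memF (l + 1) hl'; rwa [pow_succ, mul_comm] at this
          · have := memC (l + 1) hl'; rwa [pow_succ, mul_comm] at this
      · intro hq2
        have hl' := hstep l (hlt2 hq2)
        rcases h4 with h4 | h4 <;> rw [h4]
        · have := memF (l + 1) hl'; rwa [pow_succ, mul_comm] at this
        · have := memC (l + 1) hl'; rwa [pow_succ, mul_comm] at this
  · rw [hS]
    calc _ ≤ _ := Finset.card_union_le _ _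
    _ ≤ (Nat.clog 2 k + 1) + (Nat.clog 2 k + 1) := by
        gcongr <;> exact (Finset.card_image_le).trans (by simp)
    _ = 2 * (Nat.clog 2 k + 1) := by ring
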